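/- Let d ≥ 3, G open convex with B_{2ρ}(0) ⊂ G ⊂ B_R(0), 0 < ρ, and suppose vol(G) > ω_d (2ρ)^d. Then the infimum of (1/2)∫_G |∇u|² over u ∈ W^{1,2}(G) vanishing on B_ρ(0) with ∫_G |u|² = 1 is at most 2^d ω_d ρ^{d−2} / (vol(G) − ω_d (2ρ)^d). -/

import Mathlib

open MeasureTheory Metric Set

lemma maxsq_hasDerivAt (s : ℝ) : HasDerivAt (fun t : ℝ => max t 0 ^ 2) (2 * max s 0) s := by
  rcases lt_trichotomy s 0 with h | h | h
  · have : max s 0 = 0 := max_eq_right h.le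
    rw [this, mul_zero]
    refine (hasDerivAt_const s (0:ℝ)).congr_of_eventuallyEq ?_
    filter_upwards [Iio_mem_nhds h] with t ht
    simp [max_eq_right (le_of_lt (mem_Iio.mp ht))]
  · subst h
    rw [max_self, mul_zero]
    rw [hasDerivAt_iff_isLittleO]
    simp only [sub_zero, max_self, ne_eq, OfNat.ofNat_ne_zero, not_false_eq_true, zero_pow,
      smul_zero, sub_zero]
    rw [Asymptotics.isLittleO_iff]
    intro ε hε
    filter_upwards [Metric.ball_mem_nhds (0:ℝ) hε] with t ht
    rw [mem_ball, Real.dist_eq, sub_zero] at ht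
    rw [Real.norm_eq_abs, Real.norm_eq_abs]
    have h1 : max t 0 ≤ |t| := max_le (le_abs_self t) (abs_nonneg t)
    have h2 : 0 ≤ max t 0 := le_max_right t 0
    have : max t 0 ^ 2 ≤ |t| * |t| := by nlinarith
    rw [abs_of_nonneg (by positivity : (0:ℝ) ≤ max t 0 ^ 2)]
    nlinarith [abs_nonneg t]
  · have : max s 0 = s := max_eq_left h.le
    rw [this]
    have := hasDerivAt_pow 2 s
    refine (this.congr_of_eventuallyEq ?_).congr_deriv (by ring)
    filter_upwards [Ioi_mem_nhds h] with t ht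
    simp [max_eq_left (le_of_lt (mem_Ioi.mp ht))]

lemma qq_hasDerivAt (a s : ℝ) :
    HasDerivAt (fun t : ℝ => max (t - a) 0 ^ 2) (2 * max (s - a) 0) s := by
  have h := (maxsq_hasDerivAt (s - a)).comp s ((hasDerivAt_id s).sub_const a)
  simpa [Function.comp_def] using h

noncomputable def gg : ℝ → ℝ := fun s =>
  8/3 * (max s 0 ^ 2 - max (s - 1/4) 0 ^ 2 - max (s - 3/4) 0 ^ 2 + max (s - 1) 0 ^ 2)

lemma gg_hasDerivAt (s : ℝ) : HasDerivAt gg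
    (16/3 * (max s 0 - max (s - 1/4) 0 - max (s - 3/4) 0 + max (s - 1) 0)) s := by
  have h0 := qq_hasDerivAt 0 s
  simp only [sub_zero] at h0
  have h := (((h0.sub (qq_hasDerivAt (1/4) s)).sub (qq_hasDerivAt (3/4) s)).add
    (qq_hasDerivAt 1 s)).const_mul (8/3 : ℝ)
  refine h.congr_deriv (by ring)

lemma gg_diff : Differentiable ℝ gg := fun s => (gg_hasDerivAt s).differentiableAt

lemma gg_deriv (s : ℝ) : deriv gg s =
    16/3 * (max s 0 - max (s - 1/4) 0 - max (s - 3/4) 0 + max (s - 1) 0) :=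
  (gg_hasDerivAt s).deriv

lemma max_pair {a b : ℝ} (h : a ≤ b) :
    max a 0 ≤ max b 0 ∧ max b 0 ≤ max a 0 + (b - a) := by
  constructor
  · exact max_le_max h le_rfl
  · refine max_le ?_ ?_
    · have := le_max_left a 0; linarith
    · have := le_max_right a 0; linarith

lemma gg_deriv_nonneg (s : ℝ) : 0 ≤ deriv gg s := by
  rw [gg_deriv]
  rcases le_total s (3/4) with h | h
  · have h34 : max (s - 3/4) 0 = 0 := max_eq_right (by linarith)
    have h1 : max (s - 1) 0 = 0 := max_eq_right (by linarith)
    have := (max_pair (show s - 1/4 ≤ s by linarith)).1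
    rw [h34, h1]; linarith
  · have hm0 : max s 0 = s := max_eq_left (by linarith)
    have hm14 : max (s - 1/4) 0 = s - 1/4 := max_eq_left (by linarith)
    have := (max_pair (show s - 1 ≤ s - 3/4 by linarith)).2
    rw [hm0, hm14]; linarith

lemma gg_deriv_bound (s : ℝ) : |deriv gg s| ≤ 4/3 := by
  rw [gg_deriv, abs_le]
  have p1 := max_pair (show s - 1/4 ≤ s by linarith)
  have p2 := max_pair (show s - 1 ≤ s - 3/4 by linarith)
  obtain ⟨a1, a2⟩ := p1
  obtain ⟨b1, b2⟩ := p2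
  constructor
  · linarith
  · linarith

lemma gg_zero {s : ℝ} (h : s ≤ 0) : gg s = 0 := by
  have h0 : max s 0 = 0 := max_eq_right h
  have h14 : max (s - 1/4) 0 = 0 := max_eq_right (by linarith)
  have h34 : max (s - 3/4) 0 = 0 := max_eq_right (by linarith)
  have h1 : max (s - 1) 0 = 0 := max_eq_right (by linarith)
  rw [gg]; rw [h0, h14, h34, h1]; ring

lemma gg_one {s : ℝ} (h : 1 ≤ s) : gg s = 1 := by
  have h0 : max s 0 = s := max_eq_left (by linarith)
  have h14 : max (s - 1/4) 0 = s - 1/4 := max_eq_left (by linarith)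
  have h34 : max (s - 3/4) 0 = s - 3/4 := max_eq_left (by linarith)
  have h1 : max (s - 1) 0 = s - 1 := max_eq_left (by linarith)
  rw [gg, h0, h14, h34, h1]; ring

lemma gg_mono : Monotone gg := monotone_of_deriv_nonneg gg_diff gg_deriv_nonneg

lemma gg_nonneg (s : ℝ) : 0 ≤ gg s := by
  rcases le_total s 0 with h | h
  · rw [gg_zero h]
  · rw [← gg_zero le_rfl]; exact gg_mono h

lemma gg_le_one (s : ℝ) : gg s ≤ 1 := by
  rcases le_total s 1 with h | h
  · rw [← gg_one le_rfl]; exact gg_mono h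
  · rw [gg_one h]

lemma gg_lip : LipschitzWith (4/3 : NNReal) gg := by
  refine lipschitzWith_of_nnnorm_deriv_le gg_diff fun x => ?_
  rw [← NNReal.coe_le_coe, coe_nnnorm, Real.norm_eq_abs]
  have h := gg_deriv_bound x
  have : ((4/3 : NNReal) : ℝ) = 4/3 := by norm_num
  rw [this]
  exact h


-- [aux lemmas inserted at compile time]

theorem stmt_2 (d : ℕ) (hd : 3 ≤ d) (ρ R : ℝ) (hρ : 0 < ρ)
    (G : Set (EuclideanSpace ℝ (Fin d))) (hGo : IsOpen G) (hGc : Convex ℝ G)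
    (h1 : closedBall (0 : EuclideanSpace ℝ (Fin d)) (2 * ρ) ⊆ G)
    (h2 : G ⊆ closedBall (0 : EuclideanSpace ℝ (Fin d)) R)
    (hvol : (volume (ball (0 : EuclideanSpace ℝ (Fin d)) 1)).toReal * (2 * ρ) ^ d
      < (volume G).toReal) :
    sInf {e : ℝ | ∃ u : EuclideanSpace ℝ (Fin d) → ℝ,
        DifferentiableOn ℝ u G ∧
        (∀ x ∈ closedBall (0 : EuclideanSpace ℝ (Fin d)) ρ, u x = 0) ∧
        (∫ x in G, (u x) ^ 2) = 1 ∧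
        e = (1 / 2) * ∫ x in G, ‖fderivWithin ℝ u G x‖ ^ 2} ≤
      2 ^ d * (volume (ball (0 : EuclideanSpace ℝ (Fin d)) 1)).toReal * ρ ^ (d - 2) /
        ((volume G).toReal
          - (volume (ball (0 : EuclideanSpace ℝ (Fin d)) 1)).toReal * (2 * ρ) ^ d) := by
  classical
  have hE : True := trivial
  set ω : ℝ := (volume (ball (0 : EuclideanSpace ℝ (Fin d)) 1)).toReal with hω_def
  have hω0 : 0 ≤ ω := ENNReal.toReal_nonneg
  -- the test function
  set v : EuclideanSpace ℝ (Fin d) → ℝ := fun x => gg ((‖x‖ - ρ) / ρ) with hv_def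
  -- v vanishes on the small closed ball
  have hv_zero : ∀ x ∈ closedBall (0 : EuclideanSpace ℝ (Fin d)) ρ, v x = 0 := by
    intro x hx
    rw [mem_closedBall, dist_zero_right] at hx
    exact gg_zero (by rw [div_nonpos_iff]; right; constructor <;> linarith)
  -- v equals one outside the ball of radius 2ρ
  have hv_one : ∀ x : EuclideanSpace ℝ (Fin d), 2 * ρ ≤ ‖x‖ → v x = 1 := by
    intro x hx
    exact gg_one (by rw [le_div_iff₀ hρ]; linarith)
  -- v is Lipschitz
  have hw_lip : LipschitzWith ⟨ρ⁻¹, by positivity⟩ (fun x : EuclideanSpace ℝ (Fin d) => (‖x‖ - ρ) / ρ) := by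
    erw [lipschitzWith_iff_dist_le_mul]
    intro x y
    rw [Real.dist_eq]
    have : (‖x‖ - ρ) / ρ - (‖y‖ - ρ) / ρ = (‖x‖ - ‖y‖) / ρ := by field_simp; ring
    rw [this, abs_div, abs_of_pos hρ, div_le_iff₀ hρ]
    erw [NNReal.coe_mk]
    have heq : ρ⁻¹ * dist x y * ρ = dist x y := by field_simp
    rw [heq, dist_eq_norm]
    exact abs_norm_sub_norm_le x y
  have hv_lip : LipschitzWith ((4/3 : NNReal) * ⟨ρ⁻¹, by positivity⟩) v :=
    gg_lip.comp hw_lip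
  have hv_cont : Continuous v := hv_lip.continuous
  -- v is differentiable
  have hv_diff : Differentiable ℝ v := by
    intro x
    by_cases hx : x = (0 : EuclideanSpace ℝ (Fin d))
    · subst hx
      have hev : (fun _ : EuclideanSpace ℝ (Fin d) => (0:ℝ)) =ᶠ[nhds (0 : EuclideanSpace ℝ (Fin d))] v := by
        filter_upwards [Metric.ball_mem_nhds (0 : EuclideanSpace ℝ (Fin d)) hρ] with y hy
        rw [mem_ball, dist_zero_right] at hy
        exact (hv_zero y (by rw [mem_closedBall, dist_zero_right]; exact hy.le)).symm
      exact (differentiableAt_const (0:ℝ)).congr_of_eventuallyEq hev.symm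
    · have hnorm : DifferentiableAt ℝ (fun y : EuclideanSpace ℝ (Fin d) => ‖y‖) x :=
        (differentiableAt_id).norm ℝ hx
      have harg : DifferentiableAt ℝ
          (fun y : EuclideanSpace ℝ (Fin d) => (‖y‖ - ρ) / ρ) x :=
        (hnorm.sub_const ρ).mul (differentiableAt_const ρ⁻¹)
      exact gg_diff.differentiableAt.comp x harg
  -- bound on the derivative
  have hfd_bound : ∀ x : EuclideanSpace ℝ (Fin d), ‖fderiv ℝ v x‖ ≤ 4 / (3 * ρ) := by
    intro x
    have := norm_fderiv_le_of_lipschitz ℝ (x₀ := x) hv_lip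
    refine this.trans (le_of_eq ?_)
    have h43 : ((4/3 : NNReal) : ℝ) = 4/3 := by norm_num
    erw [NNReal.coe_mul, h43, NNReal.coe_mk]
    field_simp
  -- derivative vanishes far away
  have hfd_zero : ∀ x : EuclideanSpace ℝ (Fin d), 2 * ρ < ‖x‖ → fderiv ℝ v x = 0 := by
    intro x hx
    have hopen : IsOpen {y : EuclideanSpace ℝ (Fin d) | 2 * ρ < ‖y‖} := isOpen_lt continuous_const continuous_norm
    have hev : v =ᶠ[nhds x] fun _ => (1:ℝ) := by
      filter_upwards [hopen.mem_nhds hx] with y hy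
      exact hv_one y (le_of_lt hy)
    rw [hev.fderiv_eq, fderiv_fun_const]
    rfl
  -- measure-theoretic setup
  have hGm : MeasurableSet G := hGo.measurableSet
  have hGfin : volume G < ⊤ :=
    lt_of_le_of_lt (measure_mono h2) measure_closedBall_lt_top
  set B : Set (EuclideanSpace ℝ (Fin d)) := closedBall (0 : EuclideanSpace ℝ (Fin d)) (2 * ρ) with hB_def
  have hBm : MeasurableSet B := measurableSet_closedBall
  have hBfin : volume B < ⊤ := measure_closedBall_lt_top
  have hBvol : (volume B).toReal = (2 * ρ) ^ d * ω := by
    rw [hB_def, Measure.addHaar_closedBall volume (0:EuclideanSpace ℝ (Fin d)) (by positivity)]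
    rw [ENNReal.toReal_mul, ENNReal.toReal_ofReal (by positivity)]
    congr 2
    exact finrank_euclideanSpace_fin
  -- integrability of v^2 on G
  have hIv2 : IntegrableOn (fun x => (v x) ^ 2) G volume := by
    refine Integrable.mono' (g := fun _ => (1:ℝ))
      (integrableOn_const hGfin.ne) ((hv_cont.pow 2).aestronglyMeasurable) ?_
    refine Filter.Eventually.of_forall fun x => ?_
    rw [Real.norm_eq_abs, abs_of_nonneg (by positivity)]
    have h1 := gg_nonneg ((‖x‖ - ρ)/ρ)
    have h2 := gg_le_one ((‖x‖ - ρ)/ρ)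
    simp only [hv_def]
    nlinarith
  -- integrability of the gradient-norm squared on G
  have hIfd : IntegrableOn (fun x => ‖fderiv ℝ v x‖ ^ 2) G volume := by
    refine Integrable.mono' (g := fun _ => (4/(3*ρ))^2)
      (integrableOn_const hGfin.ne)
      (((measurable_fderiv ℝ v).norm.pow_const 2).aestronglyMeasurable) ?_
    refine Filter.Eventually.of_forall fun x => ?_
    rw [Real.norm_eq_abs, abs_of_nonneg (by positivity)]
    have := hfd_bound x
    have h0 : (0:ℝ) ≤ ‖fderiv ℝ v x‖ := norm_nonneg _
    nlinarith
  -- lower bound for the L² norm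
  set Q : ℝ := ∫ x in G, (v x) ^ 2 with hQ_def
  have hQ_lb : (volume G).toReal - ω * (2 * ρ) ^ d ≤ Q := by
    have step1 : ∫ x in G \ B, (v x) ^ 2 ∂volume ≤ Q := by
      refine setIntegral_mono_set hIv2 ?_ (HasSubset.Subset.eventuallyLE diff_subset)
      refine Filter.Eventually.of_forall fun x => by positivity
    have step2 : ∫ x in G \ B, (v x) ^ 2 ∂volume = (volume (G \ B)).toReal := by
      rw [setIntegral_congr_fun (hGm.diff hBm) (g := fun _ => (1:ℝ))]
      · rw [setIntegral_const, smul_eq_mul, mul_one]; rfl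
      · intro x hx
        have : ¬ (‖x‖ ≤ 2 * ρ) := by
          intro hc
          exact hx.2 (by rw [hB_def, mem_closedBall, dist_zero_right]; exact hc)
        show v x ^ 2 = 1
        rw [hv_one x (le_of_not_ge this), one_pow]
    have step3 : (volume G).toReal ≤ (volume (G \ B)).toReal + (volume B).toReal := by
      have hsub : G ⊆ (G \ B) ∪ B := subset_diff_union G B
      have hle : volume G ≤ volume (G \ B) + volume B :=
        le_trans (measure_mono hsub) (measure_union_le _ _)
      have hfin1 : volume (G \ B) ≠ ⊤ := (lt_of_le_of_lt (measure_mono diff_subset) hGfin).ne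
      calc (volume G).toReal ≤ (volume (G \ B) + volume B).toReal := by
            refine ENNReal.toReal_le_toReal hGfin.ne ?_ |>.2 hle
            exact (ENNReal.add_lt_top.2 ⟨lt_top_iff_ne_top.2 hfin1, hBfin⟩).ne
        _ = (volume (G \ B)).toReal + (volume B).toReal :=
            ENNReal.toReal_add hfin1 hBfin.ne
    rw [hBvol] at step3
    linarith [step1, step2 ▸ step1]
  have hQ_pos : 0 < Q := lt_of_lt_of_le (by linarith) hQ_lb
  -- upper bound for the energy
  set Erg : ℝ := ∫ x in G, ‖fderiv ℝ v x‖ ^ 2 with hE_def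
  have hErg_nonneg : 0 ≤ Erg :=
    setIntegral_nonneg hGm fun x _ => by positivity
  have hErg_ub : Erg ≤ (4/(3*ρ))^2 * ((2*ρ)^d * ω) := by
    have hsplit : (∫ x in G ∩ B, ‖fderiv ℝ v x‖ ^ 2 ∂volume)
        + (∫ x in G \ B, ‖fderiv ℝ v x‖ ^ 2 ∂volume) = Erg :=
      integral_inter_add_diff hBm hIfd
    have houter : (∫ x in G \ B, ‖fderiv ℝ v x‖ ^ 2 ∂volume) = 0 := by
      rw [setIntegral_congr_fun (hGm.diff hBm) (g := fun _ => (0:ℝ))]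
      · exact integral_zero _ _
      · intro x hx
        have : ¬ (‖x‖ ≤ 2 * ρ) := by
          intro hc
          exact hx.2 (by rw [hB_def, mem_closedBall, dist_zero_right]; exact hc)
        show ‖fderiv ℝ v x‖ ^ 2 = 0
        rw [hfd_zero x (lt_of_not_ge this)]
        simp
    have hinner : (∫ x in G ∩ B, ‖fderiv ℝ v x‖ ^ 2 ∂volume)
        ≤ (4/(3*ρ))^2 * (volume B).toReal := by
      calc (∫ x in G ∩ B, ‖fderiv ℝ v x‖ ^ 2 ∂volume)
          ≤ ∫ _ in G ∩ B, (4/(3*ρ))^2 ∂volume := by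
            refine setIntegral_mono_on (hIfd.mono_set inter_subset_left)
              (integrableOn_const (lt_of_le_of_lt (measure_mono inter_subset_left) hGfin).ne)
              (hGm.inter hBm) fun x _ => ?_
            have := hfd_bound x
            have h0 : (0:ℝ) ≤ ‖fderiv ℝ v x‖ := norm_nonneg _
            nlinarith
        _ = (volume (G ∩ B)).toReal * (4/(3*ρ))^2 := by
            rw [setIntegral_const, smul_eq_mul]; rfl
        _ ≤ (volume B).toReal * (4/(3*ρ))^2 := by
            refine mul_le_mul_of_nonneg_right ?_ (by positivity)
            exact ENNReal.toReal_le_toReal (lt_of_le_of_lt (measure_mono inter_subset_right) hBfin).ne hBfin.ne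
              |>.2 (measure_mono inter_subset_right)
        _ = (4/(3*ρ))^2 * (volume B).toReal := mul_comm _ _
    rw [hBvol] at hinner
    linarith
  -- the normalized test function
  set c : ℝ := (Real.sqrt Q)⁻¹ with hc_def
  have hc2 : c ^ 2 = Q⁻¹ := by
    rw [hc_def, inv_pow, Real.sq_sqrt hQ_pos.le]
  set u : EuclideanSpace ℝ (Fin d) → ℝ := fun x => c * v x with hu_def
  have hu_int : (∫ x in G, (u x) ^ 2) = 1 := by
    simp only [hu_def, mul_pow]
    rw [integral_const_mul, hc2, ← hQ_def, inv_mul_cancel₀ hQ_pos.ne']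
  have hu_energy : (∫ x in G, ‖fderivWithin ℝ u G x‖ ^ 2) = Q⁻¹ * Erg := by
    rw [setIntegral_congr_fun hGm (g := fun x => Q⁻¹ * ‖fderiv ℝ v x‖ ^ 2)]
    · rw [integral_const_mul, ← hE_def]
    · intro x hx
      show ‖fderivWithin ℝ u G x‖ ^ 2 = Q⁻¹ * ‖fderiv ℝ v x‖ ^ 2
      rw [fderivWithin_of_isOpen hGo hx]
      have : fderiv ℝ u x = c • fderiv ℝ v x := fderiv_const_mul (hv_diff x) c
      rw [this, norm_smul, Real.norm_eq_abs, mul_pow, sq_abs, hc2]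
  -- membership in the variational set
  set S : Set ℝ := {e : ℝ | ∃ u : EuclideanSpace ℝ (Fin d) → ℝ,
      DifferentiableOn ℝ u G ∧
      (∀ x ∈ closedBall (0 : EuclideanSpace ℝ (Fin d)) ρ, u x = 0) ∧
      (∫ x in G, (u x) ^ 2) = 1 ∧
      e = (1 / 2) * ∫ x in G, ‖fderivWithin ℝ u G x‖ ^ 2} with hS_def
  have hmem : ((1:ℝ) / 2) * (Q⁻¹ * Erg) ∈ S := by
    refine ⟨u, (hv_diff.const_mul c).differentiableOn, ?_, hu_int, ?_⟩
    · intro x hx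
      simp only [hu_def]
      rw [hv_zero x hx, mul_zero]
    · rw [hu_energy]
  have hbdd : BddBelow S := by
    refine ⟨0, fun e he => ?_⟩
    obtain ⟨w, _, _, _, hw⟩ := he
    rw [hw]
    have : 0 ≤ ∫ x in G, ‖fderivWithin ℝ w G x‖ ^ 2 :=
      setIntegral_nonneg hGm fun x _ => by positivity
    linarith
  refine le_trans (csInf_le hbdd hmem) ?_
  -- final numeric bound
  set N : ℝ := 2 ^ d * ω * ρ ^ (d - 2) with hN_def
  set D : ℝ := (volume G).toReal - ω * (2 * ρ) ^ d with hD_def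
  have hD_pos : 0 < D := by rw [hD_def]; linarith
  have hρd : ρ ^ d = ρ ^ (d - 2) * ρ ^ 2 := by
    rw [← pow_add]
    congr 1
    omega
  have hN_nonneg : 0 ≤ N := by positivity
  have hErg_le : Erg ≤ 2 * N := by
    have key : (4/(3*ρ))^2 * ((2*ρ)^d * ω) = 16/9 * (2 ^ d * ω * ρ ^ (d-2)) := by
      rw [mul_pow (2:ℝ) ρ d, hρd]
      field_simp
      ring
    rw [hN_def]
    have h9 : (0:ℝ) ≤ 2 ^ d * ω * ρ ^ (d-2) := by positivity
    linarith [hErg_ub, key ▸ hErg_ub]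
  have hfinal : (1:ℝ)/2 * (Q⁻¹ * Erg) ≤ N / D := by
    have heq : (1:ℝ)/2 * (Q⁻¹ * Erg) = Erg / (2 * Q) := by
      field_simp
    rw [heq]
    have h2D : (0:ℝ) < 2 * D := by linarith
    have h2Q : 2 * D ≤ 2 * Q := by linarith [hQ_lb]
    calc Erg / (2 * Q) ≤ (2 * N) / (2 * D) :=
          div_le_div₀ (by linarith) hErg_le h2D h2Q
      _ = N / D := by
          rw [mul_div_mul_left _ _ (two_ne_zero)]
  exact hfinal
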